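/- arXiv:1706.01970 — 2 statements merged into one kernel-verified Lean document; each statement's English description precedes it below -/
import Mathlib

section
/- For a prime p and positive integer n with n ≡ 2 or n ≡ 4 (mod 6), the number of triples (A,B,C) of positive integers with A ≤ B ≤ C and A·B·C = p^n equals (n² + 6n + 8)/12. -/
/-- Sorted triples of naturals summing to `n`. -/
def Sfin (n : ℕ) : Finset (ℕ × ℕ × ℕ) :=
  (Finset.range (n+1) ×ˢ Finset.range (n+1) ×ˢ Finset.range (n+1)).filter
    (fun t => t.1 ≤ t.2.1 ∧ t.2.1 ≤ t.2.2 ∧ t.1 + t.2.1 + t.2.2 = n)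

lemma mem_Sfin {n : ℕ} {t : ℕ × ℕ × ℕ} :
    t ∈ Sfin n ↔ t.1 ≤ t.2.1 ∧ t.2.1 ≤ t.2.2 ∧ t.1 + t.2.1 + t.2.2 = n := by
  simp only [Sfin, Finset.mem_filter, Finset.mem_product, Finset.mem_range]
  omega

lemma Sfin_step (n : ℕ) : (Sfin (n+6)).card = (Sfin n).card + (n+6) := by
  set m := n + 6 with hm
  set F0 : Finset (ℕ × ℕ × ℕ) :=
    (Finset.range (m/2+1)).image (fun y => ((0:ℕ), y, m - y)) with hF0def
  set F1 : Finset (ℕ × ℕ × ℕ) :=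
    (Finset.Icc 1 (m/3)).image (fun x => (x, x, m - 2*x)) with hF1def
  set F2 : Finset (ℕ × ℕ × ℕ) :=
    (Finset.Icc (m/3+1) ((m-1)/2)).image (fun y => (m - 2*y, y, y)) with hF2def
  set F3 : Finset (ℕ × ℕ × ℕ) :=
    (Sfin n).image (fun t => (t.1+1, t.2.1+2, t.2.2+3)) with hF3def
  have hunion : Sfin m = F0 ∪ F1 ∪ F2 ∪ F3 := by
    ext ⟨a, b, c⟩
    simp only [hF0def, hF1def, hF2def, hF3def, mem_Sfin, Finset.mem_union,
      Finset.mem_image, Finset.mem_range, Finset.mem_Icc, Prod.mk.injEq, Prod.exists]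
    constructor
    · rintro ⟨hab, hbc, habc⟩
      by_cases ha : a = 0
      · exact Or.inl (Or.inl (Or.inl ⟨b, by omega, by omega, by omega, by omega⟩))
      by_cases hab' : a = b
      · exact Or.inl (Or.inl (Or.inr ⟨a, by omega, by omega, by omega, by omega⟩))
      by_cases hbc' : b = c
      · exact Or.inl (Or.inr ⟨b, by omega, by omega, by omega, by omega⟩)
      · exact Or.inr ⟨a-1, b-2, c-3, ⟨by omega, by omega, by omega⟩,
          by omega, by omega, by omega⟩
    · rintro (((⟨y, hy, h1, h2, h3⟩ | ⟨x, hx, h1, h2, h3⟩) | ⟨y, hy, h1, h2, h3⟩) |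
        ⟨x, y, z, ht, h1, h2, h3⟩)
      · omega
      · omega
      · omega
      · omega
  have hinj0 : Function.Injective (fun y => ((0:ℕ), y, m - y)) := by
    intro a b h; simp only [Prod.mk.injEq] at h; omega
  have hinj1 : Function.Injective (fun x => (x, x, m - 2*x)) := by
    intro a b h; simp only [Prod.mk.injEq] at h; omega
  have hinj2 : Function.Injective (fun y => (m - 2*y, y, y)) := by
    intro a b h; simp only [Prod.mk.injEq] at h; omega
  have hinj3 : Function.Injective (fun t : ℕ × ℕ × ℕ => (t.1+1, t.2.1+2, t.2.2+3)) := by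
    intro ⟨a,b,c⟩ ⟨a',b',c'⟩ h; simp only [Prod.mk.injEq] at h
    simp only [Prod.mk.injEq]; omega
  have hc0 : F0.card = m/2 + 1 := by
    rw [hF0def, Finset.card_image_of_injective _ hinj0, Finset.card_range]
  have hc1 : F1.card = m/3 := by
    rw [hF1def, Finset.card_image_of_injective _ hinj1, Nat.card_Icc]
    omega
  have hc2 : F2.card = (m-1)/2 - m/3 := by
    rw [hF2def, Finset.card_image_of_injective _ hinj2, Nat.card_Icc]
    omega
  have hc3 : F3.card = (Sfin n).card := by
    rw [hF3def, Finset.card_image_of_injective _ hinj3]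
  -- disjointness
  have d01 : Disjoint F0 F1 := by
    rw [Finset.disjoint_left]
    rintro ⟨a,b,c⟩ ht0 ht1
    simp only [hF0def, hF1def, Finset.mem_image, Finset.mem_range, Finset.mem_Icc,
      Prod.mk.injEq] at ht0 ht1
    obtain ⟨y, hy, h1, h2, h3⟩ := ht0
    obtain ⟨x, hx, g1, g2, g3⟩ := ht1
    omega
  have d012 : Disjoint (F0 ∪ F1) F2 := by
    rw [Finset.disjoint_left]
    rintro ⟨a,b,c⟩ ht01 ht2
    simp only [hF0def, hF1def, hF2def, Finset.mem_union, Finset.mem_image,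
      Finset.mem_range, Finset.mem_Icc, Prod.mk.injEq] at ht01 ht2
    obtain ⟨y, hy, g1, g2, g3⟩ := ht2
    rcases ht01 with ⟨z, hz, h1, h2, h3⟩ | ⟨x, hx, h1, h2, h3⟩ <;> omega
  have d0123 : Disjoint (F0 ∪ F1 ∪ F2) F3 := by
    rw [Finset.disjoint_left]
    rintro ⟨a,b,c⟩ ht012 ht3
    simp only [hF0def, hF1def, hF2def, hF3def, Finset.mem_union, Finset.mem_image,
      Finset.mem_range, Finset.mem_Icc, Prod.mk.injEq, Prod.exists] at ht012 ht3
    obtain ⟨x, y, z, hxyz, g1, g2, g3⟩ := ht3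
    rw [mem_Sfin] at hxyz; simp only at hxyz
    rcases ht012 with (⟨w, hw, h1, h2, h3⟩ | ⟨w, hw, h1, h2, h3⟩) | ⟨w, hw, h1, h2, h3⟩ <;>
      omega
  rw [hunion, Finset.card_union_of_disjoint d0123, Finset.card_union_of_disjoint d012,
    Finset.card_union_of_disjoint d01, hc0, hc1, hc2, hc3]
  omega

lemma Sfin_two : (Sfin 2).card = 2 := by decide

lemma Sfin_four : (Sfin 4).card = 4 := by decide

lemma Sfin_card_mod2 (k : ℕ) : (Sfin (6*k+2)).card = 3*k^2 + 5*k + 2 := by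
  induction k with
  | zero => simpa using Sfin_two
  | succ k ih =>
    have h : 6*(k+1)+2 = (6*k+2)+6 := by ring
    rw [h, Sfin_step, ih]; ring

lemma Sfin_card_mod4 (k : ℕ) : (Sfin (6*k+4)).card = 3*k^2 + 7*k + 4 := by
  induction k with
  | zero => simpa using Sfin_four
  | succ k ih =>
    have h : 6*(k+1)+4 = (6*k+4)+6 := by ring
    rw [h, Sfin_step, ih]; ring

/-- Number of cuboids with integer edge lengths and volume `N`. -/
noncomputable def cuboidCount (N : ℕ) : ℕ :=
  Set.ncard {t : ℕ × ℕ × ℕ | 0 < t.1 ∧ t.1 ≤ t.2.1 ∧ t.2.1 ≤ t.2.2 ∧ t.1 * t.2.1 * t.2.2 = N}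

lemma cuboidCount_prime_pow_eq (p n : ℕ) (hp : p.Prime) :
    cuboidCount (p ^ n) = (Sfin n).card := by
  have hp1 : 1 < p := hp.one_lt
  have hinj : Function.Injective
      (fun t : ℕ × ℕ × ℕ => (p ^ t.1, p ^ t.2.1, p ^ t.2.2)) := by
    intro ⟨a,b,c⟩ ⟨a',b',c'⟩ h
    simp only [Prod.mk.injEq] at h
    have hi := Nat.pow_right_injective hp.two_le
    exact Prod.ext (hi h.1) (Prod.ext (hi h.2.1) (hi h.2.2))
  have hset : {t : ℕ × ℕ × ℕ | 0 < t.1 ∧ t.1 ≤ t.2.1 ∧ t.2.1 ≤ t.2.2 ∧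
      t.1 * t.2.1 * t.2.2 = p ^ n} =
      (fun t : ℕ × ℕ × ℕ => (p ^ t.1, p ^ t.2.1, p ^ t.2.2)) '' ↑(Sfin n) := by
    ext ⟨A, B, C⟩
    simp only [Set.mem_setOf_eq, Set.mem_image, Finset.coe_sort_coe, Finset.mem_coe,
      Prod.mk.injEq, Prod.exists]
    constructor
    · rintro ⟨hA, hAB, hBC, habc⟩
      have hAd : A ∣ p ^ n := ⟨B * C, by linarith [habc]⟩
      have hBd : B ∣ p ^ n := ⟨A * C, by rw [← habc]; ring⟩
      have hCd : C ∣ p ^ n := ⟨A * B, by rw [← habc]; ring⟩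
      obtain ⟨a, _, rfl⟩ := (Nat.dvd_prime_pow hp).mp hAd
      obtain ⟨b, _, rfl⟩ := (Nat.dvd_prime_pow hp).mp hBd
      obtain ⟨c, _, rfl⟩ := (Nat.dvd_prime_pow hp).mp hCd
      have hsum : a + b + c = n := by
        have : p ^ (a + b + c) = p ^ n := by rw [← habc]; ring
        exact Nat.pow_right_injective hp.two_le this
      exact ⟨a, b, c, mem_Sfin.mpr ⟨(Nat.pow_le_pow_iff_right hp1).mp hAB,
        (Nat.pow_le_pow_iff_right hp1).mp hBC, hsum⟩, rfl, rfl, rfl⟩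
    · rintro ⟨a, b, c, ht, rfl, rfl, rfl⟩
      rw [mem_Sfin] at ht
      obtain ⟨hab, hbc, hsum⟩ := ht
      refine ⟨Nat.pow_pos hp.pos, Nat.pow_le_pow_right hp.pos hab,
        Nat.pow_le_pow_right hp.pos hbc, ?_⟩
      rw [← pow_add, ← pow_add, hsum]
  rw [cuboidCount, hset, Set.ncard_image_of_injective _ hinj, Set.ncard_coe_finset]

theorem cuboid_count_prime_pow (p n : ℕ) (hp : p.Prime) (hn : 0 < n)
    (hmod : n % 6 = 2 ∨ n % 6 = 4) :
    (cuboidCount (p ^ n) : ℚ) = ((n : ℚ) ^ 2 + 6 * n + 8) / 12 := by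
  rw [cuboidCount_prime_pow_eq p n hp]
  rcases hmod with h | h
  · obtain ⟨k, rfl⟩ : ∃ k, n = 6*k+2 := ⟨n/6, by omega⟩
    rw [Sfin_card_mod2]
    push_cast
    ring
  · obtain ⟨k, rfl⟩ : ∃ k, n = 6*k+4 := ⟨n/6, by omega⟩
    rw [Sfin_card_mod4]
    push_cast
    ring
end

section
/- Let p ≠ q be primes and n, m positive integers with n ≡ 3 (mod 6) and m ≡ 3 (mod 6). Then the number of triples (A,B,C) of positive integers with A ≤ B ≤ C and A·B·C = p^n·q^m equals (15 + 9n + 9m)/24 + (2n² + 2m² + 12nm + 3n²m + 3nm² + n²m²)/24. -/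
def sort3 (t : ℕ × ℕ × ℕ) : ℕ × ℕ × ℕ :=
  if t.1 ≤ t.2.1 then
    if t.2.1 ≤ t.2.2 then t
    else if t.1 ≤ t.2.2 then (t.1, t.2.2, t.2.1) else (t.2.2, t.1, t.2.1)
  else
    if t.1 ≤ t.2.2 then (t.2.1, t.1, t.2.2)
    else if t.2.1 ≤ t.2.2 then (t.2.1, t.2.2, t.1) else (t.2.2, t.2.1, t.1)

def perms (s : ℕ × ℕ × ℕ) : Finset (ℕ × ℕ × ℕ) :=
  {(s.1,s.2.1,s.2.2), (s.1,s.2.2,s.2.1), (s.2.1,s.1,s.2.2),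
   (s.2.1,s.2.2,s.1), (s.2.2,s.1,s.2.1), (s.2.2,s.2.1,s.1)}

lemma sort3_sorted (t : ℕ × ℕ × ℕ) :
    (sort3 t).1 ≤ (sort3 t).2.1 ∧ (sort3 t).2.1 ≤ (sort3 t).2.2 := by
  obtain ⟨x, y, z⟩ := t
  simp only [sort3]
  split_ifs <;> simp <;> omega

lemma sort3_prod (t : ℕ × ℕ × ℕ) :
    (sort3 t).1 * (sort3 t).2.1 * (sort3 t).2.2 = t.1 * t.2.1 * t.2.2 := by
  obtain ⟨x, y, z⟩ := t
  simp only [sort3]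
  split_ifs <;> ring_nf

lemma mem_perms_sort3 (t : ℕ × ℕ × ℕ) : t ∈ perms (sort3 t) := by
  obtain ⟨x, y, z⟩ := t
  simp only [sort3]
  split_ifs <;> simp [perms]

lemma sort3_of_perm {a b c : ℕ} (hab : a ≤ b) (hbc : b ≤ c) {t : ℕ × ℕ × ℕ}
    (ht : t ∈ perms (a, b, c)) : sort3 t = (a, b, c) := by
  simp only [perms, Finset.mem_insert, Finset.mem_singleton] at ht
  rcases ht with h | h | h | h | h | h <;> subst h <;>
    simp only [sort3] <;> split_ifs <;> simp <;> omega

def TT (N : ℕ) : Finset (ℕ × ℕ × ℕ) :=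
  (N.divisors ×ˢ N.divisors ×ˢ N.divisors).filter (fun t => t.1 * t.2.1 * t.2.2 = N)

def SS (N : ℕ) : Finset (ℕ × ℕ × ℕ) :=
  (TT N).filter (fun t => t.1 ≤ t.2.1 ∧ t.2.1 ≤ t.2.2)

lemma mem_TT {N : ℕ} (hN : N ≠ 0) {t : ℕ × ℕ × ℕ} :
    t ∈ TT N ↔ t.1 * t.2.1 * t.2.2 = N := by
  constructor
  · intro h; exact (Finset.mem_filter.1 h).2
  · intro h
    refine Finset.mem_filter.2 ⟨?_, h⟩
    simp only [Finset.mem_product, Nat.mem_divisors]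
    exact ⟨⟨⟨t.2.1 * t.2.2, by rw [← h]; ring⟩, hN⟩,
           ⟨⟨t.1 * t.2.2, by rw [← h]; ring⟩, hN⟩,
           ⟨⟨t.1 * t.2.1, by rw [← h]; ring⟩, hN⟩⟩

lemma cuboidCount_eq_SS_card {N : ℕ} (hN : N ≠ 0) : cuboidCount N = (SS N).card := by
  rw [cuboidCount, show {t : ℕ × ℕ × ℕ | 0 < t.1 ∧ t.1 ≤ t.2.1 ∧ t.2.1 ≤ t.2.2 ∧
      t.1 * t.2.1 * t.2.2 = N} = ↑(SS N) from ?_, Set.ncard_coe_finset]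
  ext t
  simp only [Set.mem_setOf_eq, Finset.coe_filter, SS, Set.mem_setOf_eq, mem_TT hN]
  constructor
  · rintro ⟨-, h1, h2, h3⟩; exact ⟨h3, h1, h2⟩
  · rintro ⟨h3, h1, h2⟩
    refine ⟨?_, h1, h2, h3⟩
    rcases Nat.eq_zero_or_pos t.1 with h | h
    · exfalso; apply hN; rw [← h3, h]; ring
    · exact h

lemma sort3_mem_SS {N : ℕ} (hN : N ≠ 0) {t : ℕ × ℕ × ℕ} (ht : t ∈ TT N) :
    sort3 t ∈ SS N := by
  refine Finset.mem_filter.2 ⟨(mem_TT hN).2 ?_, sort3_sorted t⟩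
  rw [sort3_prod]
  exact (mem_TT hN).1 ht

lemma fiberT_eq {N : ℕ} (hN : N ≠ 0) {s : ℕ × ℕ × ℕ} (hs : s ∈ SS N) :
    (TT N).filter (fun t => sort3 t = s) = perms s := by
  obtain ⟨hsT, hs1, hs2⟩ := Finset.mem_filter.1 hs
  ext t
  simp only [Finset.mem_filter]
  constructor
  · rintro ⟨-, rfl⟩; exact mem_perms_sort3 t
  · intro ht
    obtain ⟨a, b, c⟩ := s
    refine ⟨(mem_TT hN).2 ?_, sort3_of_perm hs1 hs2 ht⟩
    have hprod : a * b * c = N := (mem_TT hN).1 hsT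
    simp only [perms, Finset.mem_insert, Finset.mem_singleton] at ht
    rcases ht with h | h | h | h | h | h <;> subst h <;> rw [← hprod] <;> ring_nf

lemma fiber_identity {a b c : ℕ} (hab : a ≤ b) (hbc : b ≤ c) :
    (perms (a,b,c)).card
      + 3 * ((perms (a,b,c)).filter (fun t => t.1 = t.2.1)).card
      + 2 * ((perms (a,b,c)).filter (fun t => t.1 = t.2.1 ∧ t.2.1 = t.2.2)).card = 6 := by
  rcases eq_or_lt_of_le hab with h1 | h1 <;> rcases eq_or_lt_of_le hbc with h2 | h2
  · subst h1; subst h2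
    have : perms (a,a,a) = {(a,a,a)} := by ext t; simp [perms]
    rw [this]
    simp [Finset.filter_singleton]
  · subst h1
    have hne : a ≠ c := by omega
    have hP : perms (a,a,c) = {(a,a,c),(a,c,a),(c,a,a)} := by
      ext t; simp [perms]
    rw [hP,
      show ({(a,a,c),(a,c,a),(c,a,a)} : Finset (ℕ×ℕ×ℕ)).filter (fun t => t.1 = t.2.1)
        = {(a,a,c)} from by
          simp [Finset.filter_insert, Finset.filter_singleton, hne, hne.symm],
      show ({(a,a,c),(a,c,a),(c,a,a)} : Finset (ℕ×ℕ×ℕ)).filter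
          (fun t => t.1 = t.2.1 ∧ t.2.1 = t.2.2) = ∅ from by
          simp [Finset.filter_insert, Finset.filter_singleton, hne, hne.symm],
      Finset.card_insert_of_notMem (by simp; omega),
      Finset.card_insert_of_notMem (by simp; omega)]
    simp
  · subst h2
    have hne : a ≠ b := by omega
    have hP : perms (a,b,b) = {(a,b,b),(b,a,b),(b,b,a)} := by
      ext t; simp [perms]
    rw [hP,
      show ({(a,b,b),(b,a,b),(b,b,a)} : Finset (ℕ×ℕ×ℕ)).filter (fun t => t.1 = t.2.1)
        = {(b,b,a)} from by
          simp [Finset.filter_insert, Finset.filter_singleton, hne, hne.symm],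
      show ({(a,b,b),(b,a,b),(b,b,a)} : Finset (ℕ×ℕ×ℕ)).filter
          (fun t => t.1 = t.2.1 ∧ t.2.1 = t.2.2) = ∅ from by
          simp [Finset.filter_insert, Finset.filter_singleton, hne, hne.symm],
      Finset.card_insert_of_notMem (by simp; omega),
      Finset.card_insert_of_notMem (by simp; omega)]
    simp
  · have h13 : a < c := h1.trans h2
    simp only [perms]
    rw [Finset.card_insert_of_notMem (by simp [Prod.ext_iff]; omega),
        Finset.card_insert_of_notMem (by simp [Prod.ext_iff]; omega),
        Finset.card_insert_of_notMem (by simp [Prod.ext_iff]; omega),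
        Finset.card_insert_of_notMem (by simp [Prod.ext_iff]; omega),
        Finset.card_insert_of_notMem (by simp [Prod.ext_iff]; omega)]
    have e1 : (({(a,b,c),(a,c,b),(b,a,c),(b,c,a),(c,a,b),(c,b,a)} : Finset (ℕ×ℕ×ℕ)).filter
        (fun t => t.1 = t.2.1)) = ∅ := by
      simp [Finset.filter_insert, Finset.filter_singleton, h1.ne, h1.ne', h2.ne, h2.ne',
        h13.ne, h13.ne']
    have e2 : (({(a,b,c),(a,c,b),(b,a,c),(b,c,a),(c,a,b),(c,b,a)} : Finset (ℕ×ℕ×ℕ)).filter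
        (fun t => t.1 = t.2.1 ∧ t.2.1 = t.2.2)) = ∅ := by
      simp [Finset.filter_insert, Finset.filter_singleton, h1.ne, h1.ne', h2.ne, h2.ne',
        h13.ne, h13.ne']
    rw [e1, e2]
    simp

lemma burnside {N : ℕ} (hN : N ≠ 0) :
    (TT N).card + 3 * ((TT N).filter (fun t => t.1 = t.2.1)).card
      + 2 * ((TT N).filter (fun t => t.1 = t.2.1 ∧ t.2.1 = t.2.2)).card
      = 6 * (SS N).card := by
  have hmap : ∀ t ∈ TT N, sort3 t ∈ SS N := fun t ht => sort3_mem_SS hN ht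
  rw [Finset.card_eq_sum_card_fiberwise hmap,
      Finset.card_eq_sum_card_fiberwise
        (fun t ht => sort3_mem_SS hN (Finset.mem_filter.1 ht).1 : ∀ t ∈ (TT N).filter
          (fun t => t.1 = t.2.1), sort3 t ∈ SS N),
      Finset.card_eq_sum_card_fiberwise
        (fun t ht => sort3_mem_SS hN (Finset.mem_filter.1 ht).1 : ∀ t ∈ (TT N).filter
          (fun t => t.1 = t.2.1 ∧ t.2.1 = t.2.2), sort3 t ∈ SS N),
      Finset.mul_sum, Finset.mul_sum, ← Finset.sum_add_distrib, ← Finset.sum_add_distrib]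
  rw [show 6 * (SS N).card = ∑ _s ∈ SS N, 6 from by
    rw [Finset.sum_const, smul_eq_mul, mul_comm]]
  refine Finset.sum_congr rfl ?_
  intro s hs
  obtain ⟨hsT, hs1, hs2⟩ := Finset.mem_filter.1 hs
  have e1 : (TT N).filter (fun t => sort3 t = s) = perms s := fiberT_eq hN hs
  have e2 : ((TT N).filter (fun t => t.1 = t.2.1)).filter (fun t => sort3 t = s)
      = (perms s).filter (fun t => t.1 = t.2.1) := by
    rw [← e1, Finset.filter_filter, Finset.filter_filter]
    congr 1
    funext t
    exact propext and_comm
  have e3 : ((TT N).filter (fun t => t.1 = t.2.1 ∧ t.2.1 = t.2.2)).filter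
        (fun t => sort3 t = s)
      = (perms s).filter (fun t => t.1 = t.2.1 ∧ t.2.1 = t.2.2) := by
    rw [← e1, Finset.filter_filter, Finset.filter_filter]
    congr 1
    funext t
    exact propext and_comm
  rw [e1, e2, e3]
  obtain ⟨a, b, c⟩ := s
  exact fiber_identity hs1 hs2


section
variable {p q : ℕ}

lemma pq_fact_p (hp : p.Prime) (hq : q.Prime) (hpq : p ≠ q) (i j : ℕ) :
    (p ^ i * q ^ j).factorization p = i := by
  rw [Nat.factorization_mul (pow_ne_zero _ hp.pos.ne') (pow_ne_zero _ hq.pos.ne')]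
  simp [hp.factorization_pow, hq.factorization_pow, Finsupp.single_apply, hpq, Ne.symm hpq]

lemma pq_inj (hp : p.Prime) (hq : q.Prime) (hpq : p ≠ q) {i j i' j' : ℕ}
    (h : p ^ i * q ^ j = p ^ i' * q ^ j') : i = i' ∧ j = j' := by
  constructor
  · rw [← pq_fact_p hp hq hpq i j, h, pq_fact_p hp hq hpq]
  · have h' : q ^ j * p ^ i = q ^ j' * p ^ i' := by rw [mul_comm, h, mul_comm]
    rw [← pq_fact_p hq hp (Ne.symm hpq) j i, h', pq_fact_p hq hp (Ne.symm hpq)]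

lemma dvd_decomp (hp : p.Prime) (hq : q.Prime) {n m a : ℕ} (h : a ∣ p ^ n * q ^ m) :
    ∃ i ≤ n, ∃ j ≤ m, a = p ^ i * q ^ j := by
  obtain ⟨u, v, hu, hv, rfl⟩ := exists_dvd_and_dvd_of_dvd_mul h
  obtain ⟨i, hi, rfl⟩ := (Nat.dvd_prime_pow hp).1 hu
  obtain ⟨j, hj, rfl⟩ := (Nat.dvd_prime_pow hq).1 hv
  exact ⟨i, hi, j, hj, rfl⟩

lemma prod3_pow (p q a b c d e f : ℕ) :
    (p ^ a * q ^ d) * (p ^ b * q ^ e) * (p ^ c * q ^ f)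
      = p ^ (a + b + c) * q ^ (d + e + f) := by
  rw [pow_add, pow_add, pow_add, pow_add]; ring

lemma pow_le_of_dvd_pq (hp : p.Prime) (hq : q.Prime) (hpq : p ≠ q) {i n m : ℕ}
    (h : p ^ i ∣ p ^ n * q ^ m) : i ≤ n := by
  have hcop : Nat.Coprime (p ^ i) (q ^ m) :=
    Nat.Coprime.pow _ _ ((Nat.coprime_primes hp hq).2 hpq)
  have := hcop.dvd_of_dvd_mul_right h
  exact (Nat.pow_dvd_pow_iff_le_right hp.one_lt).1 this

end

def In (n : ℕ) : Finset (ℕ × ℕ) :=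
  (Finset.range (n+1) ×ˢ Finset.range (n+1)).filter (fun x => x.1 + x.2 ≤ n)

lemma In_card (n : ℕ) : (In n).card * 2 = (n+1) * (n+2) := by
  have h1 : In n = (Finset.range (n+1)).biUnion
      (fun i => (Finset.range (n+1-i)).image (fun j => (i, j))) := by
    ext ⟨x1, x2⟩
    simp only [In, Finset.mem_filter, Finset.mem_product, Finset.mem_range,
      Finset.mem_biUnion, Finset.mem_image]
    constructor
    · rintro ⟨⟨hx1, hx2⟩, hs⟩
      exact ⟨x1, by omega, x2, by omega, rfl⟩
    · rintro ⟨i, hi, j, hj, h⟩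
      obtain ⟨h1, h2⟩ := Prod.ext_iff.1 h
      simp only [← h1, ← h2] at *
      omega
  rw [h1, Finset.card_biUnion]
  · have h2 : ∀ i ∈ Finset.range (n+1),
        ((Finset.range (n+1-i)).image (fun j => (i, j))).card = n+1-i := by
      intro i _
      rw [Finset.card_image_of_injective _ (fun a b hab => by
        simpa using hab)]
      simp
    rw [Finset.sum_congr rfl h2]
    have h3 : ∑ i ∈ Finset.range (n+1), (n+1-i) = ∑ i ∈ Finset.range (n+1), (i+1) := by
      rw [← Finset.sum_range_reflect (fun i => i + 1) (n+1)]
      exact Finset.sum_congr rfl (fun i hi => by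
        simp only [Finset.mem_range] at hi; omega)
    have h4 : ∑ i ∈ Finset.range (n+1), (i+1) = ∑ i ∈ Finset.range (n+2), i := by
      rw [Finset.sum_range_succ' (fun i => i) (n+1)]
      simp
    rw [h3, h4, Finset.sum_range_id_mul_two]
    have e : n + 2 - 1 = n + 1 := by omega
    rw [e]; ring
  · intro i _ i' _ hii
    simp only [Finset.disjoint_left, Finset.mem_image]
    rintro a ⟨j, _, rfl⟩ ⟨j', _, h⟩
    exact hii ((Prod.ext_iff.1 h).1).symm


lemma pqN {p q : ℕ} (hpq : 0 < p * q) {n m i j k l : ℕ} (hin : i + j ≤ n) (hkm : k + l ≤ m) :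
    p ^ i * q ^ k * (p ^ j * q ^ l) * (p ^ (n - i - j) * q ^ (m - k - l))
      = p ^ n * q ^ m := by
  rw [show p ^ i * q ^ k * (p ^ j * q ^ l) * (p ^ (n - i - j) * q ^ (m - k - l))
      = (p ^ i * p ^ j * p ^ (n - i - j)) * (q ^ k * q ^ l * q ^ (m - k - l)) from by ring,
    ← pow_add, ← pow_add, ← pow_add, ← pow_add,
    show i + j + (n - i - j) = n from by omega,
    show k + l + (m - k - l) = m from by omega]

section
variable {p q : ℕ} (hp : p.Prime) (hq : q.Prime) (hpq : p ≠ q)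

include hp hq hpq

lemma TT_card (n m : ℕ) :
    (TT (p ^ n * q ^ m)).card * 4 = (n+1)*(n+2)*((m+1)*(m+2)) := by
  have hppos := hp.pos
  have hqpos := hq.pos
  have hN : p ^ n * q ^ m ≠ 0 := by positivity
  have hcard : (In n ×ˢ In m).card = (TT (p ^ n * q ^ m)).card := by
    apply Finset.card_nbij (fun x => (p ^ x.1.1 * q ^ x.2.1, p ^ x.1.2 * q ^ x.2.2,
      p ^ (n - x.1.1 - x.1.2) * q ^ (m - x.2.1 - x.2.2)))
    · rintro ⟨⟨i, j⟩, ⟨k, l⟩⟩ hx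
      simp only [Finset.mem_coe, Finset.mem_product, In, Finset.mem_filter, Finset.mem_range] at hx
      refine (mem_TT hN).2 ?_
      show p ^ i * q ^ k * (p ^ j * q ^ l) * (p ^ (n-i-j) * q ^ (m-k-l)) = p ^ n * q ^ m
      exact pqN (by positivity) (by omega) (by omega)
    · rintro ⟨⟨i, j⟩, ⟨k, l⟩⟩ hx ⟨⟨i', j'⟩, ⟨k', l'⟩⟩ hx' h
      simp only [Prod.mk.injEq] at h ⊢
      obtain ⟨h1, h2, h3⟩ := h
      obtain ⟨e1, e2⟩ := pq_inj hp hq hpq h1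
      obtain ⟨e3, e4⟩ := pq_inj hp hq hpq h2
      exact ⟨⟨e1, e3⟩, e2, e4⟩
    · intro t ht
      rw [Set.mem_image]
      obtain ⟨a, b, c⟩ := t
      have hprod : a * b * c = p ^ n * q ^ m := (mem_TT hN).1 (Finset.mem_coe.1 ht)
      obtain ⟨i, hi, k, hk, rfl⟩ := dvd_decomp hp hq ⟨b * c, by rw [← hprod]; ring⟩
      obtain ⟨j, hj, l, hl, rfl⟩ := dvd_decomp hp hq
        (⟨p ^ i * q ^ k * c, by rw [← hprod]; ring⟩ : b ∣ p ^ n * q ^ m)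
      have hij : i + j ≤ n := pow_le_of_dvd_pq hp hq hpq
        ⟨q ^ k * q ^ l * c, by rw [← hprod, pow_add]; ring⟩
      have hkl : k + l ≤ m := pow_le_of_dvd_pq hq hp (Ne.symm hpq)
        ⟨p ^ i * p ^ j * c, by rw [mul_comm (q^m) (p^n), ← hprod, pow_add]; ring⟩
      have hc : c = p ^ (n - i - j) * q ^ (m - k - l) := by
        have h2 : (p ^ i * q ^ k) * (p ^ j * q ^ l) * c
            = (p ^ i * q ^ k) * (p ^ j * q ^ l) * (p ^ (n-i-j) * q ^ (m-k-l)) := by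
          rw [hprod, pqN (by positivity) hij hkl]
        exact Nat.eq_of_mul_eq_mul_left (by positivity) h2
      refine ⟨((i, j), (k, l)), ?_, ?_⟩
      · simp only [Finset.coe_product, Set.mem_prod, Finset.mem_coe, In,
          Finset.mem_filter, Finset.mem_product, Finset.mem_range]
        constructor
        · exact ⟨⟨by omega, by omega⟩, by omega⟩
        · exact ⟨⟨by omega, by omega⟩, by omega⟩
      · exact Prod.ext rfl (Prod.ext rfl hc.symm)
  have e1 := In_card n
  have e2 := In_card m
  calc (TT (p ^ n * q ^ m)).card * 4
      = ((In n).card * 2) * ((In m).card * 2) := by rw [← hcard, Finset.card_product]; ring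
    _ = (n+1)*(n+2)*((m+1)*(m+2)) := by rw [e1, e2]

lemma P_card (n m : ℕ) :
    ((TT (p ^ n * q ^ m)).filter (fun t => t.1 = t.2.1)).card = (n/2 + 1) * (m/2 + 1) := by
  have hppos := hp.pos
  have hqpos := hq.pos
  have hN : p ^ n * q ^ m ≠ 0 := by positivity
  have hcard : (Finset.range (n/2 + 1) ×ˢ Finset.range (m/2 + 1)).card
      = ((TT (p ^ n * q ^ m)).filter (fun t => t.1 = t.2.1)).card := by
    apply Finset.card_nbij (fun x => (p ^ x.1 * q ^ x.2, p ^ x.1 * q ^ x.2,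
      p ^ (n - 2 * x.1) * q ^ (m - 2 * x.2)))
    · rintro ⟨i, k⟩ hx
      simp only [Finset.mem_coe, Finset.mem_product, Finset.mem_range] at hx
      refine Finset.mem_filter.2 ⟨(mem_TT hN).2 ?_, rfl⟩
      show p ^ i * q ^ k * (p ^ i * q ^ k) * (p ^ (n - 2*i) * q ^ (m - 2*k)) = p ^ n * q ^ m
      rw [show (n : ℕ) - 2*i = n - i - i from by omega,
          show (m : ℕ) - 2*k = m - k - k from by omega]
      exact pqN (by positivity) (by omega) (by omega)
    · rintro ⟨i, k⟩ hx ⟨i', k'⟩ hx' h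
      simp only [Prod.mk.injEq] at h ⊢
      exact pq_inj hp hq hpq h.1
    · intro t ht
      rw [Set.mem_image]
      obtain ⟨a, b, c⟩ := t
      simp only [Finset.mem_coe, Finset.mem_filter] at ht
      obtain ⟨htT, hdiag⟩ := ht
      have hprod : a * b * c = p ^ n * q ^ m := (mem_TT hN).1 htT
      replace hdiag : a = b := hdiag
      subst hdiag
      obtain ⟨i, hi, k, hk, rfl⟩ := dvd_decomp hp hq
        (⟨a * c, by rw [← hprod]; ring⟩ : a ∣ p ^ n * q ^ m)
      have hij : i + i ≤ n := pow_le_of_dvd_pq hp hq hpq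
        ⟨q ^ k * q ^ k * c, by rw [← hprod, pow_add]; ring⟩
      have hkl : k + k ≤ m := pow_le_of_dvd_pq hq hp (Ne.symm hpq)
        ⟨p ^ i * p ^ i * c, by rw [mul_comm (q^m) (p^n), ← hprod, pow_add]; ring⟩
      have hc : c = p ^ (n - 2*i) * q ^ (m - 2*k) := by
        have h2 : (p ^ i * q ^ k) * (p ^ i * q ^ k) * c
            = (p ^ i * q ^ k) * (p ^ i * q ^ k) * (p ^ (n-i-i) * q ^ (m-k-k)) := by
          rw [hprod, pqN (by positivity) hij hkl]
        rw [show (n : ℕ) - 2*i = n - i - i from by omega,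
            show (m : ℕ) - 2*k = m - k - k from by omega]
        exact Nat.eq_of_mul_eq_mul_left (by positivity) h2
      refine ⟨(i, k), ?_, ?_⟩
      · simp only [Finset.coe_product, Set.mem_prod, Finset.mem_coe, Finset.mem_range]
        omega
      · exact Prod.ext rfl (Prod.ext rfl hc.symm)
  rw [← hcard, Finset.card_product, Finset.card_range, Finset.card_range]

lemma Q_card (n m : ℕ) (hn3 : n % 3 = 0) (hm3 : m % 3 = 0) :
    ((TT (p ^ n * q ^ m)).filter (fun t => t.1 = t.2.1 ∧ t.2.1 = t.2.2)).card = 1 := by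
  have hppos := hp.pos
  have hqpos := hq.pos
  have hN : p ^ n * q ^ m ≠ 0 := by positivity
  set r := p ^ (n/3) * q ^ (m/3) with hr
  have hr3 : r * r * r = p ^ n * q ^ m := by
    calc r * r * r
        = p^(n/3) * q^(m/3) * (p^(n/3) * q^(m/3))
            * (p^(n - n/3 - n/3) * q^(m - m/3 - m/3)) := by
          rw [show n - n/3 - n/3 = n/3 from by omega,
              show m - m/3 - m/3 = m/3 from by omega]
      _ = p ^ n * q ^ m := pqN (by positivity) (by omega) (by omega)
  have hset : (TT (p ^ n * q ^ m)).filter (fun t => t.1 = t.2.1 ∧ t.2.1 = t.2.2)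
      = {(r, r, r)} := by
    ext t
    simp only [Finset.mem_filter, Finset.mem_singleton]
    constructor
    · rintro ⟨htT, h1, h2⟩
      obtain ⟨a, b, c⟩ := t
      replace h1 : a = b := h1
      replace h2 : b = c := h2
      subst h1; subst h2
      have hprod : a * a * a = p ^ n * q ^ m := (mem_TT hN).1 htT
      have ha : a = r := by
        have h3 : a ^ 3 = r ^ 3 := by
          rw [show a ^ 3 = a * a * a from by ring, show r ^ 3 = r * r * r from by ring,
            hprod, hr3]
        exact Nat.pow_left_injective (by norm_num) h3
      rw [ha]
    · rintro rfl
      exact ⟨(mem_TT hN).2 hr3, rfl, rfl⟩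
  rw [hset, Finset.card_singleton]
end


theorem cuboid_count_two_primes (p q n m : ℕ) (hp : p.Prime) (hq : q.Prime)
    (hpq : p ≠ q) (hn : 0 < n) (hm : 0 < m)
    (hnmod : n % 6 = 3) (hmmod : m % 6 = 3) :
    (cuboidCount (p ^ n * q ^ m) : ℚ) = (15 + 9 * (n : ℚ) + 9 * (m : ℚ)) / 24 + (2 * (n : ℚ) ^ 2 + 2 * (m : ℚ) ^ 2 + 12 * n * m + 3 * n ^ 2 * m + 3 * n * m ^ 2 + n ^ 2 * m ^ 2) / 24 := by
  have hppos := hp.pos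
  have hqpos := hq.pos
  have hN : p ^ n * q ^ m ≠ 0 := by positivity
  obtain ⟨u, hu⟩ : ∃ u, n = 2 * u + 1 := ⟨n / 2, by omega⟩
  obtain ⟨v, hv⟩ : ∃ v, m = 2 * v + 1 := ⟨m / 2, by omega⟩
  have hb := burnside hN
  rw [Q_card hp hq hpq n m (by omega) (by omega)] at hb
  have h1 : ((TT (p ^ n * q ^ m)).card : ℚ)
      + 3 * (((TT (p ^ n * q ^ m)).filter (fun t => t.1 = t.2.1)).card : ℚ) + 2
      = 6 * ((SS (p ^ n * q ^ m)).card : ℚ) := by exact_mod_cast hb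
  have h2 : ((TT (p ^ n * q ^ m)).card : ℚ) * 4
      = ((n : ℚ)+1)*((n : ℚ)+2)*(((m : ℚ)+1)*((m : ℚ)+2)) := by
    exact_mod_cast TT_card hp hq hpq n m
  have h3 : (((TT (p ^ n * q ^ m)).filter (fun t => t.1 = t.2.1)).card : ℚ)
      = ((u : ℚ) + 1) * ((v : ℚ) + 1) := by
    have := P_card hp hq hpq n m
    rw [show n / 2 = u from by omega, show m / 2 = v from by omega] at this
    exact_mod_cast this
  have hnq : (n : ℚ) = 2 * (u : ℚ) + 1 := by rw [hu]; push_cast; ring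
  have hmq : (m : ℚ) = 2 * (v : ℚ) + 1 := by rw [hv]; push_cast; ring
  rw [cuboidCount_eq_SS_card hN, hnq, hmq]
  rw [hnq, hmq] at h2
  linear_combination -h1/6 + h2/24 + h3/2
end
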